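/- The pivots of the Neville elimination of the reverse Bessel coefficient matrix C are: for odd j, p_{ij} = (2i-2j)!/(2^{i-j}(i-j)!) for 1 ≤ j ≤ i ≤ n; for even j, p_{ij} = 0 for i > j and p_{jj} = 1. -/

import Mathlib

/-- Entries of the lower triangular reverse Bessel coefficient matrix. -/
noncomputable def revC (i j : ℕ) : ℝ :=
  if j ≤ i then ((2 * i - j - 1).factorial : ℝ) / (2 ^ (i - j) * (j - 1).factorial * (i - j).factorial)
  else 0

/-- `revNE k i j` is the `(i,j)` entry of `C^{(k+1)}`, the matrix obtained after `k`
steps of Neville elimination of the reverse Bessel coefficient matrix. -/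
noncomputable def revNE : ℕ → ℕ → ℕ → ℝ
  | 0, i, j => revC i j
  | k + 1, i, j =>
      if k + 1 ≤ j ∧ j < i ∧ revNE k (i - 1) (k + 1) ≠ 0 then
        revNE k i j - revNE k i (k + 1) / revNE k (i - 1) (k + 1) * revNE k (i - 1) j
      else revNE k i j

lemma fact_cast_succ (n : ℕ) : ((n + 1).factorial : ℝ) = (n + 1) * n.factorial := by
  rw [Nat.factorial_succ]; push_cast; ring

lemma revC_of_lt {i j : ℕ} (h : i < j) : revC i j = 0 := by
  rw [revC, if_neg (by omega)]

lemma revC_diag (j : ℕ) : revC j j = 1 := by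
  rw [revC, if_pos le_rfl, show 2 * j - j - 1 = j - 1 from by omega, Nat.sub_self]
  simp [Nat.factorial_ne_zero]

lemma revC_one (a : ℕ) : revC (a + 1) 1 =
    ((2 * a).factorial : ℝ) / (2 ^ a * a.factorial) := by
  rw [revC, if_pos (by omega), show 2 * (a + 1) - 1 - 1 = 2 * a from by omega,
    show a + 1 - 1 = a from by omega]
  simp

lemma revC_one_ne (a : ℕ) : revC (a + 1) 1 ≠ 0 := by
  rw [revC_one]
  apply div_ne_zero
  · exact_mod_cast (Nat.factorial_pos _).ne'
  · have : (0:ℝ) < (2:ℝ) ^ a * a.factorial := by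
      apply mul_pos (by positivity)
      exact_mod_cast Nat.factorial_pos _
    exact this.ne'

lemma revC_two (a : ℕ) : revC (a + 2) 2 = revC (a + 2) 1 := by
  have e1 : ((2 * (a + 1)).factorial : ℝ) = (2 * a + 2) * ((2 * a + 1) * (2 * a).factorial) := by
    rw [show 2 * (a + 1) = 2 * a + 1 + 1 from by omega, fact_cast_succ, fact_cast_succ]
    push_cast; ring
  have e2 : ((a + 1).factorial : ℝ) = (a + 1) * a.factorial := fact_cast_succ a
  rw [revC, if_pos (by omega), show 2 * (a + 2) - 2 - 1 = 2 * a + 1 from by omega,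
    show a + 2 - 2 = a from by omega, show (2 : ℕ) - 1 = 1 from rfl,
    show a + 2 = (a + 1) + 1 from rfl, revC_one, e1, e2, fact_cast_succ (2 * a), pow_succ]
  have h1 : ((2 * a).factorial : ℝ) ≠ 0 := by exact_mod_cast (Nat.factorial_pos _).ne'
  have h2 : (a.factorial : ℝ) ≠ 0 := by exact_mod_cast (Nat.factorial_pos _).ne'
  have h4 : (2 : ℝ) ^ a ≠ 0 := by positivity
  field_simp
  push_cast
  ring

lemma revC_one_succ (m : ℕ) : revC (m + 2) 1 = ((2 * m + 1 : ℕ) : ℝ) * revC (m + 1) 1 := by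
  have e1 : ((2 * (m + 1)).factorial : ℝ) = (2 * m + 2) * ((2 * m + 1) * (2 * m).factorial) := by
    rw [show 2 * (m + 1) = 2 * m + 1 + 1 from by omega, fact_cast_succ, fact_cast_succ]
    push_cast; ring
  have e2 : ((m + 1).factorial : ℝ) = (m + 1) * m.factorial := fact_cast_succ m
  rw [show m + 2 = (m + 1) + 1 from rfl, revC_one, revC_one, e1, e2, pow_succ]
  have h1 : ((2 * m).factorial : ℝ) ≠ 0 := by exact_mod_cast (Nat.factorial_pos _).ne'
  have h2 : (m.factorial : ℝ) ≠ 0 := by exact_mod_cast (Nat.factorial_pos _).ne'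
  have h4 : (2 : ℝ) ^ m ≠ 0 := by positivity
  field_simp
  push_cast
  ring

lemma revC_key (c t : ℕ) :
    revC (c + 4 + t) (c + 3) - ((2 * (c + 2 + t) + 1 : ℕ) : ℝ) * revC (c + 3 + t) (c + 3) =
      revC (c + 2 + t) (c + 1) := by
  have e1 : ((c + 2 * t + 4).factorial : ℝ)
      = (c + 2 * t + 4) * ((c + 2 * t + 3) * (c + 2 * t + 2).factorial) := by
    rw [show c + 2 * t + 4 = c + 2 * t + 2 + 1 + 1 from by omega, fact_cast_succ, fact_cast_succ]
    push_cast; ring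
  have e2 : ((c + 2).factorial : ℝ) = (c + 2) * ((c + 1) * c.factorial) := by
    rw [show c + 2 = c + 1 + 1 from rfl, fact_cast_succ, fact_cast_succ]; push_cast; ring
  have e3 : ((t + 1).factorial : ℝ) = (t + 1) * t.factorial := fact_cast_succ t
  rw [revC, if_pos (by omega), revC, if_pos (by omega), revC, if_pos (by omega),
    show 2 * (c + 4 + t) - (c + 3) - 1 = c + 2 * t + 4 from by omega,
    show c + 4 + t - (c + 3) = t + 1 from by omega,
    show c + 3 - 1 = c + 2 from by omega,
    show 2 * (c + 3 + t) - (c + 3) - 1 = c + 2 * t + 2 from by omega,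
    show c + 3 + t - (c + 3) = t from by omega,
    show 2 * (c + 2 + t) - (c + 1) - 1 = c + 2 * t + 2 from by omega,
    show c + 2 + t - (c + 1) = t + 1 from by omega,
    show c + 1 - 1 = c from by omega,
    e1, e2, e3, pow_succ]
  have h1 : ((c + 2 * t + 2).factorial : ℝ) ≠ 0 := by exact_mod_cast (Nat.factorial_pos _).ne'
  have h2 : (c.factorial : ℝ) ≠ 0 := by exact_mod_cast (Nat.factorial_pos _).ne'
  have h3 : (t.factorial : ℝ) ≠ 0 := by exact_mod_cast (Nat.factorial_pos _).ne'
  have h4 : (2 : ℝ) ^ t ≠ 0 := by positivity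
  field_simp
  push_cast
  ring

lemma revNE_formula (k : ℕ) : ∀ i j : ℕ, 1 ≤ j →
    revNE k i j = if j ≤ k + k % 2 then (if i = j then (1:ℝ) else 0)
      else revC (i - (k + k % 2)) (j - (k + k % 2)) := by
  induction k with
  | zero =>
    intro i j hj
    rw [revNE, if_neg (by omega)]
    simp
  | succ k ih =>
    intro i j hj
    rw [revNE]
    rcases Nat.mod_two_eq_zero_or_one k with hk | hk
    · -- k even
      have hs : k + 1 + (k + 1) % 2 = k + 2 := by omega
      have hks : k + k % 2 = k := by omega
      rw [hs]
      by_cases hc : k + 1 ≤ j ∧ j < i ∧ revNE k (i - 1) (k + 1) ≠ 0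
      · rw [if_pos hc]
        obtain ⟨h1, h2, h3⟩ := hc
        have hik : k + 2 ≤ i := by omega
        have ep : revNE k (i - 1) (k + 1) = revC (i - k - 2 + 1) 1 := by
          rw [ih _ _ (by omega), hks, if_neg (by omega),
            show k + 1 - k = 1 from by omega, show i - 1 - k = i - k - 2 + 1 from by omega]
        have hP : revC (i - k - 2 + 1) 1 ≠ 0 := revC_one_ne _
        have eB : revNE k i (k + 1) = revC (i - k) 1 := by
          rw [ih _ _ (by omega), hks, if_neg (by omega), show k + 1 - k = 1 from by omega]
        have eA : revNE k i j = revC (i - k) (j - k) := by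
          rw [ih _ _ hj, hks, if_neg (by omega)]
        have eD : revNE k (i - 1) j = revC (i - k - 2 + 1) (j - k) := by
          rw [ih _ _ hj, hks, if_neg (by omega),
            show i - 1 - k = i - k - 2 + 1 from by omega]
        rw [eA, eB, eD, ep]
        rcases (show j = k + 1 ∨ j = k + 2 ∨ k + 3 ≤ j from by omega) with hjc | hjc | hjc
        · subst hjc
          rw [show k + 1 - k = 1 from by omega, div_mul_cancel₀ _ hP,
            show i - k = i - k - 2 + 1 + 1 from by omega,
            sub_self, if_pos (by omega), if_neg (by omega)]
        · subst hjc
          rw [show k + 2 - k = 2 from by omega]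
          have h2a : revC (i - k) 2 = revC (i - k) 1 := by
            have := revC_two (i - k - 2)
            rwa [show i - k - 2 + 2 = i - k from by omega] at this
          have h2b : revC (i - k - 2 + 1) 2 = revC (i - k - 2 + 1) 1 := by
            have := revC_two (i - k - 3)
            rwa [show i - k - 3 + 2 = i - k - 2 + 1 from by omega] at this
          rw [h2a, h2b, div_mul_cancel₀ _ hP, sub_self,
            if_pos (by omega), if_neg (by omega)]
        · obtain ⟨c, hcc⟩ : ∃ c, j = k + 3 + c := ⟨j - k - 3, by omega⟩
          obtain ⟨t, htt⟩ : ∃ t, i = j + 1 + t := ⟨i - j - 1, by omega⟩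
          have hP' : revC (c + 3 + t) 1 ≠ 0 := by
            have := revC_one_ne (c + 2 + t)
            rwa [show c + 2 + t + 1 = c + 3 + t from by omega] at this
          have eBP : revC (c + 4 + t) 1 = ((2 * (c + 2 + t) + 1 : ℕ) : ℝ) * revC (c + 3 + t) 1 := by
            have := revC_one_succ (c + 2 + t)
            rwa [show c + 2 + t + 2 = c + 4 + t from by omega,
              show c + 2 + t + 1 = c + 3 + t from by omega] at this
          rw [if_neg (by omega), show i - k - 2 + 1 = c + 3 + t from by omega,
            show i - k = c + 4 + t from by omega,
            show j - k = c + 3 from by omega,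
            show i - (k + 2) = c + 2 + t from by omega,
            show j - (k + 2) = c + 1 from by omega,
            eBP, mul_div_assoc, div_self hP', mul_one]
          exact revC_key c t
      · rw [if_neg hc, ih i j hj, hks]
        by_cases hjk : j ≤ k
        · rw [if_pos hjk, if_pos (show j ≤ k + 2 from by omega)]
        · rw [if_neg hjk]
          push_neg at hc
          have hij : i ≤ j := by
            by_contra h
            push_neg at h
            have h0 := hc (by omega) h
            rw [ih _ _ (by omega), hks, if_neg (by omega),
              show k + 1 - k = 1 from by omega,
              show i - 1 - k = i - k - 2 + 1 from by omega] at h0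
            exact revC_one_ne _ h0
          rcases eq_or_lt_of_le hij with he | hlt
          · rw [he, revC_diag]
            by_cases h : j ≤ k + 2
            · rw [if_pos h, if_pos rfl]
            · rw [if_neg h, revC_diag]
          · rw [revC_of_lt (show i - k < j - k from by omega)]
            by_cases h : j ≤ k + 2
            · rw [if_pos h, if_neg (by omega)]
            · rw [if_neg h, revC_of_lt (by omega)]
    · -- k odd
      have hs : k + 1 + (k + 1) % 2 = k + k % 2 := by omega
      rw [hs]
      by_cases hc : k + 1 ≤ j ∧ j < i ∧ revNE k (i - 1) (k + 1) ≠ 0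
      · rw [if_pos hc]
        obtain ⟨h1, h2, h3⟩ := hc
        rw [ih (i - 1) (k + 1) (by omega), if_pos (by omega)] at h3
        have hi1 : i - 1 = k + 1 := by
          by_contra h
          rw [if_neg h] at h3; exact h3 rfl
        have hi : i = k + 2 := by omega
        have hjv : j = k + 1 := by omega
        subst hi hjv
        have e1 : revNE k (k + 2) (k + 1) = 0 := by
          rw [ih _ _ (by omega), if_pos (by omega), if_neg (by omega)]
        have e2 : revNE k (k + 1) (k + 1) = 1 := by
          rw [ih _ _ (by omega), if_pos (by omega), if_pos rfl]
        rw [show k + 2 - 1 = k + 1 from by omega, e1, e2, if_pos (by omega), if_neg (by omega)]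
        norm_num
      · rw [if_neg hc]
        exact ih i j hj

theorem revBessel_NE_pivots (n : ℕ) :
    (∀ i j : ℕ, Odd j → 1 ≤ j → j ≤ i → i ≤ n →
        revNE (j - 1) i j = ((2 * i - 2 * j).factorial : ℝ) / (2 ^ (i - j) * (i - j).factorial)) ∧
      (∀ i j : ℕ, Even j → 1 ≤ j → j < i → i ≤ n → revNE (j - 1) i j = 0) ∧
      (∀ j : ℕ, Even j → 1 ≤ j → j ≤ n → revNE (j - 1) j j = 1) := by
  refine ⟨?_, ?_, ?_⟩
  · intro i j hodd hj hji hin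
    obtain ⟨m, rfl⟩ := hodd
    rw [revNE_formula _ i _ (by omega),
      show 2 * m + 1 - 1 + (2 * m + 1 - 1) % 2 = 2 * m from by omega,
      if_neg (by omega), show 2 * m + 1 - 2 * m = 1 from by omega,
      show i - 2 * m = i - (2 * m + 1) + 1 from by omega, revC_one,
      show 2 * (i - (2 * m + 1)) = 2 * i - 2 * (2 * m + 1) from by omega]
  · intro i j heven hj hji hin
    rw [revNE_formula _ i _ (by omega), if_pos (by obtain ⟨m, rfl⟩ := heven; omega),
      if_neg (by omega)]
  · intro j heven hj hjn
    rw [revNE_formula _ j _ (by omega), if_pos (by obtain ⟨m, rfl⟩ := heven; omega),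
      if_pos rfl]
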